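/- Let ϑ(ξ₁,ξ₂,ξ₃,τ) = Σ_{n∈ℤ³} e^{πi⟨τn,n⟩ + 2πi⟨ξ,n⟩} be the genus-3 theta function with symmetric τ such that −iτ is positive definite. Fix η₁, η₂, η₃ and the off-diagonal entries τ₁₂, τ₁₃, τ₂₃. Under ξⱼ = (ηⱼ − πiτⱼⱼ)/(2πi) and λⱼ = e^{πiτⱼⱼ}, as (λ₁,λ₂,λ₃) → (0,0,0) one has ϑ → 1 + e^{η₁} + e^{η₂} + e^{η₃} + e^{η₁+η₂+2πiτ₁₂} + e^{η₁+η₃+2πiτ₁₃} + e^{η₂+η₃+2πiτ₂₃} + e^{η₁+η₂+η₃+2πi(τ₁₂+τ₁₃+τ₂₃)}. -/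

import Mathlib

open Complex Filter

/-- The limiting exponent for the soliton limit. -/
noncomputable def thetaCf (η₁ η₂ η₃ τ₁₂ τ₁₃ τ₂₃ : ℂ) (n : ℤ × ℤ × ℤ) : ℂ :=
  η₁ * n.1 + η₂ * n.2.1 + η₃ * n.2.2
    + 2 * Real.pi * Complex.I *
      (τ₁₂ * n.1 * n.2.1 + τ₁₃ * n.1 * n.2.2 + τ₂₃ * n.2.1 * n.2.2)

lemma theta_q_nonneg (k : ℤ) : 0 ≤ k * (k - 1) := by
  rcases le_or_gt k 0 with h | h <;> nlinarith

lemma theta_summable_exp_neg_sq : Summable fun k : ℤ => Real.exp (-(k : ℝ) ^ 2) := by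
  apply Summable.of_nat_of_neg <;>
  · apply Real.summable_exp_neg_nat.of_nonneg_of_le (fun n => (Real.exp_pos _).le)
    intro n
    apply Real.exp_le_exp.mpr
    have h : (n : ℝ) ≤ (n : ℝ) ^ 2 := by exact_mod_cast Nat.le_self_pow (by norm_num) n
    push_cast
    nlinarith

lemma theta_factor_tendsto (k : ℤ) :
    Tendsto (fun t : ℝ => Complex.exp (-(Real.pi * t * ((k * (k - 1) : ℤ) : ℂ)))) atTop
      (nhds (if k * (k - 1) = 0 then 1 else 0)) := by
  by_cases h : k * (k - 1) = 0
  · rw [if_pos h]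
    simp only [h, Int.cast_zero, mul_zero, neg_zero, Complex.exp_zero]
    exact tendsto_const_nhds
  · rw [if_neg h]
    have hq0 : 0 ≤ k * (k - 1) := theta_q_nonneg k
    rw [tendsto_zero_iff_norm_tendsto_zero]
    have hnorm : ∀ t : ℝ, ‖Complex.exp (-(Real.pi * t * ((k * (k - 1) : ℤ) : ℂ)))‖
        = Real.exp (t * (-(Real.pi * ((k * (k - 1) : ℤ) : ℝ)))) := by
      intro t
      rw [show (-(Real.pi * t * ((k * (k - 1) : ℤ) : ℂ)))
          = ((t * (-(Real.pi * ((k * (k - 1) : ℤ) : ℝ))) : ℝ) : ℂ) by push_cast; ring]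
      simp [Complex.norm_exp]
    simp only [hnorm]
    apply Real.tendsto_exp_atBot.comp
    apply Filter.Tendsto.atTop_mul_const_of_neg _ tendsto_id
    have hq1 : (1 : ℝ) ≤ ((k * (k - 1) : ℤ) : ℝ) := by exact_mod_cast by omega
    nlinarith [Real.pi_pos]

set_option maxHeartbeats 2000000 in
/-- Genus-3 soliton limit: with `τⱼⱼ = i bⱼ`, `ξⱼ = (ηⱼ - πiτⱼⱼ)/(2πi)` and fixed
`η₁, η₂, η₃, τ₁₂, τ₁₃, τ₂₃`, the genus-3 theta function tends to
`1 + e^{η₁} + e^{η₂} + e^{η₃} + e^{η₁+η₂+2πiτ₁₂} + e^{η₁+η₃+2πiτ₁₃} + e^{η₂+η₃+2πiτ₂₃}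
+ e^{η₁+η₂+η₃+2πi(τ₁₂+τ₁₃+τ₂₃)}` as `b₁, b₂, b₃ → +∞` (i.e. `λ₁, λ₂, λ₃ → 0`). -/
theorem theta3_soliton_limit (η₁ η₂ η₃ τ₁₂ τ₁₃ τ₂₃ : ℂ) :
    Tendsto (fun b : ℝ × ℝ × ℝ =>
        ∑' n : ℤ × ℤ × ℤ,
          Complex.exp (Real.pi * Complex.I *
              ((Complex.I * b.1) * (n.1 : ℂ) ^ 2
                + (Complex.I * b.2.1) * (n.2.1 : ℂ) ^ 2
                + (Complex.I * b.2.2) * (n.2.2 : ℂ) ^ 2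
                + 2 * τ₁₂ * (n.1 : ℂ) * (n.2.1 : ℂ)
                + 2 * τ₁₃ * (n.1 : ℂ) * (n.2.2 : ℂ)
                + 2 * τ₂₃ * (n.2.1 : ℂ) * (n.2.2 : ℂ))
            + 2 * Real.pi * Complex.I *
              (((η₁ - Real.pi * Complex.I * (Complex.I * b.1)) /
                  (2 * Real.pi * Complex.I)) * (n.1 : ℂ)
                + ((η₂ - Real.pi * Complex.I * (Complex.I * b.2.1)) /
                  (2 * Real.pi * Complex.I)) * (n.2.1 : ℂ)
                + ((η₃ - Real.pi * Complex.I * (Complex.I * b.2.2)) /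
                  (2 * Real.pi * Complex.I)) * (n.2.2 : ℂ))))
      (atTop ×ˢ (atTop ×ˢ atTop))
      (nhds (1 + Complex.exp η₁ + Complex.exp η₂ + Complex.exp η₃
        + Complex.exp (η₁ + η₂ + 2 * Real.pi * Complex.I * τ₁₂)
        + Complex.exp (η₁ + η₃ + 2 * Real.pi * Complex.I * τ₁₃)
        + Complex.exp (η₂ + η₃ + 2 * Real.pi * Complex.I * τ₂₃)
        + Complex.exp (η₁ + η₂ + η₃
            + 2 * Real.pi * Complex.I * (τ₁₂ + τ₁₃ + τ₂₃)))) := by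
  set l : Filter (ℝ × ℝ × ℝ) := atTop ×ˢ (atTop ×ˢ atTop) with hl
  set C : ℤ × ℤ × ℤ → ℂ := thetaCf η₁ η₂ η₃ τ₁₂ τ₁₃ τ₂₃ with hCdef
  set F : (ℝ × ℝ × ℝ) → (ℤ × ℤ × ℤ) → ℂ := fun b n =>
    Complex.exp (C n - Real.pi * b.1 * ((n.1 * (n.1 - 1) : ℤ) : ℂ)
      - Real.pi * b.2.1 * ((n.2.1 * (n.2.1 - 1) : ℤ) : ℂ)
      - Real.pi * b.2.2 * ((n.2.2 * (n.2.2 - 1) : ℤ) : ℂ)) with hFdef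
  set g : ℤ × ℤ × ℤ → ℂ := fun n =>
    if n.1 * (n.1 - 1) = 0 ∧ n.2.1 * (n.2.1 - 1) = 0 ∧ n.2.2 * (n.2.2 - 1) = 0
      then Complex.exp (C n) else 0 with hgdef
  set K : ℝ := ‖η₁‖ + ‖η₂‖ + ‖η₃‖ + 2 * Real.pi * ‖τ₁₂‖ + 2 * Real.pi * ‖τ₁₃‖
      + 2 * Real.pi * ‖τ₂₃‖ + 1 with hKdef
  have hK1 : (1 : ℝ) ≤ K := by
    rw [hKdef]
    nlinarith [norm_nonneg η₁, norm_nonneg η₂, norm_nonneg η₃,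
      mul_nonneg Real.pi_pos.le (norm_nonneg τ₁₂),
      mul_nonneg Real.pi_pos.le (norm_nonneg τ₁₃),
      mul_nonneg Real.pi_pos.le (norm_nonneg τ₂₃)]
  have t1 : Tendsto (fun b : ℝ × ℝ × ℝ => b.1) l atTop := by
    rw [hl]; exact tendsto_fst
  have t2 : Tendsto (fun b : ℝ × ℝ × ℝ => b.2.1) l atTop := by
    rw [hl]; exact tendsto_fst.comp tendsto_snd
  have t3 : Tendsto (fun b : ℝ × ℝ × ℝ => b.2.2) l atTop := by
    rw [hl]; exact tendsto_snd.comp tendsto_snd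
  set bd : ℤ × ℤ × ℤ → ℝ := fun n =>
    Real.exp (4 * K + 3 - (n.1 : ℝ) ^ 2 - (n.2.1 : ℝ) ^ 2 - (n.2.2 : ℝ) ^ 2) with hbd
  -- Rewrite the summand into the convenient form `F`.
  have hexp : ∀ (b : ℝ × ℝ × ℝ) (n : ℤ × ℤ × ℤ),
      (Real.pi * Complex.I *
          ((Complex.I * b.1) * (n.1 : ℂ) ^ 2
            + (Complex.I * b.2.1) * (n.2.1 : ℂ) ^ 2
            + (Complex.I * b.2.2) * (n.2.2 : ℂ) ^ 2
            + 2 * τ₁₂ * (n.1 : ℂ) * (n.2.1 : ℂ)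
            + 2 * τ₁₃ * (n.1 : ℂ) * (n.2.2 : ℂ)
            + 2 * τ₂₃ * (n.2.1 : ℂ) * (n.2.2 : ℂ))
        + 2 * Real.pi * Complex.I *
          (((η₁ - Real.pi * Complex.I * (Complex.I * b.1)) /
              (2 * Real.pi * Complex.I)) * (n.1 : ℂ)
            + ((η₂ - Real.pi * Complex.I * (Complex.I * b.2.1)) /
              (2 * Real.pi * Complex.I)) * (n.2.1 : ℂ)
            + ((η₃ - Real.pi * Complex.I * (Complex.I * b.2.2)) /
              (2 * Real.pi * Complex.I)) * (n.2.2 : ℂ)))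
      = C n - Real.pi * b.1 * ((n.1 * (n.1 - 1) : ℤ) : ℂ)
        - Real.pi * b.2.1 * ((n.2.1 * (n.2.1 - 1) : ℤ) : ℂ)
        - Real.pi * b.2.2 * ((n.2.2 * (n.2.2 - 1) : ℤ) : ℂ) := by
    intro b n
    have hπ : ((Real.pi : ℂ)) ≠ 0 := Complex.ofReal_ne_zero.mpr Real.pi_ne_zero
    have hI : (Complex.I) ≠ 0 := Complex.I_ne_zero
    rw [hCdef]
    unfold thetaCf
    push_cast
    field_simp
    ring_nf
    simp [Complex.I_sq]
    ring
  have hfun : (fun b : ℝ × ℝ × ℝ =>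
      ∑' n : ℤ × ℤ × ℤ,
        Complex.exp (Real.pi * Complex.I *
            ((Complex.I * b.1) * (n.1 : ℂ) ^ 2
              + (Complex.I * b.2.1) * (n.2.1 : ℂ) ^ 2
              + (Complex.I * b.2.2) * (n.2.2 : ℂ) ^ 2
              + 2 * τ₁₂ * (n.1 : ℂ) * (n.2.1 : ℂ)
              + 2 * τ₁₃ * (n.1 : ℂ) * (n.2.2 : ℂ)
              + 2 * τ₂₃ * (n.2.1 : ℂ) * (n.2.2 : ℂ))
          + 2 * Real.pi * Complex.I *
            (((η₁ - Real.pi * Complex.I * (Complex.I * b.1)) /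
                (2 * Real.pi * Complex.I)) * (n.1 : ℂ)
              + ((η₂ - Real.pi * Complex.I * (Complex.I * b.2.1)) /
                (2 * Real.pi * Complex.I)) * (n.2.1 : ℂ)
              + ((η₃ - Real.pi * Complex.I * (Complex.I * b.2.2)) /
                (2 * Real.pi * Complex.I)) * (n.2.2 : ℂ))))
      = fun b => ∑' n, F b n := by
    funext b
    exact tsum_congr fun n => by rw [hexp b n]
  rw [hfun]
  -- Value of the limit sum.
  have htsum : (∑' n, g n) = (1 + Complex.exp η₁ + Complex.exp η₂ + Complex.exp η₃
      + Complex.exp (η₁ + η₂ + 2 * Real.pi * Complex.I * τ₁₂)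
      + Complex.exp (η₁ + η₃ + 2 * Real.pi * Complex.I * τ₁₃)
      + Complex.exp (η₂ + η₃ + 2 * Real.pi * Complex.I * τ₂₃)
      + Complex.exp (η₁ + η₂ + η₃
          + 2 * Real.pi * Complex.I * (τ₁₂ + τ₁₃ + τ₂₃))) := by
    rw [hgdef, hCdef,
      tsum_eq_sum (s := ({0, 1} : Finset ℤ) ×ˢ (({0, 1} : Finset ℤ) ×ˢ ({0, 1} : Finset ℤ)))]
    · norm_num [Finset.sum_product, thetaCf]
      ring_nf
    · intro n hn
      rw [if_neg]
      intro hc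
      apply hn
      simp only [Finset.mem_product, Finset.mem_insert, Finset.mem_singleton]
      refine ⟨?_, ?_, ?_⟩ <;> [have := hc.1; have := hc.2.1; have := hc.2.2] <;>
        · rcases mul_eq_zero.mp this with h | h <;> omega
  rw [← htsum]
  -- Dominated convergence.
  apply tendsto_tsum_of_dominated_convergence (bound := bd)
  · -- summability of the bound
    have h1 := theta_summable_exp_neg_sq
    have hpos : ∀ k : ℤ, (0 : ℝ) ≤ Real.exp (-(k : ℝ) ^ 2) := fun k => (Real.exp_pos _).le
    have h2 : Summable (fun p : ℤ × ℤ =>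
        Real.exp (-(p.1 : ℝ) ^ 2) * Real.exp (-(p.2 : ℝ) ^ 2)) :=
      h1.mul_of_nonneg h1 hpos hpos
    have h3 : Summable (fun n : ℤ × ℤ × ℤ =>
        Real.exp (-(n.1 : ℝ) ^ 2) * (Real.exp (-(n.2.1 : ℝ) ^ 2) * Real.exp (-(n.2.2 : ℝ) ^ 2))) :=
      h1.mul_of_nonneg h2 hpos (fun p => mul_nonneg (hpos _) (hpos _))
    apply (h3.mul_left (Real.exp (4 * K + 3))).congr
    intro n
    rw [hbd, ← Real.exp_add, ← Real.exp_add, ← Real.exp_add]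
    ring_nf
  · -- pointwise convergence
    intro n
    have h1 := (theta_factor_tendsto n.1).comp t1
    have h2 := (theta_factor_tendsto n.2.1).comp t2
    have h3 := (theta_factor_tendsto n.2.2).comp t3
    have H := (tendsto_const_nhds (x := Complex.exp (C n)) (f := l)).mul ((h1.mul h2).mul h3)
    have hsplit : ∀ b : ℝ × ℝ × ℝ, Complex.exp (C n)
        * ((Complex.exp (-(Real.pi * b.1 * ((n.1 * (n.1 - 1) : ℤ) : ℂ)))
            * Complex.exp (-(Real.pi * b.2.1 * ((n.2.1 * (n.2.1 - 1) : ℤ) : ℂ))))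
          * Complex.exp (-(Real.pi * b.2.2 * ((n.2.2 * (n.2.2 - 1) : ℤ) : ℂ))))
        = F b n := by
      intro b
      rw [hFdef]
      simp only [← Complex.exp_add]
      congr 1
      ring
    have hval : Complex.exp (C n)
        * (((if n.1 * (n.1 - 1) = 0 then 1 else 0) * (if n.2.1 * (n.2.1 - 1) = 0 then 1 else 0))
          * (if n.2.2 * (n.2.2 - 1) = 0 then 1 else 0)) = g n := by
      rw [hgdef]
      by_cases c1 : n.1 * (n.1 - 1) = 0 <;> by_cases c2 : n.2.1 * (n.2.1 - 1) = 0 <;>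
        by_cases c3 : n.2.2 * (n.2.2 - 1) = 0 <;> simp [c1, c2, c3]
    rw [← hval]
    exact H.congr hsplit
  · -- uniform bound, eventually
    set B : ℝ := (2 * K + 2) / Real.pi with hB
    have hπB : 2 * K + 2 ≤ Real.pi * B := by
      rw [hB, mul_div_cancel₀ _ Real.pi_ne_zero]
    have hb1 : ∀ᶠ b : ℝ × ℝ × ℝ in l, B ≤ b.1 := t1.eventually_ge_atTop B
    have hb2 : ∀ᶠ b : ℝ × ℝ × ℝ in l, B ≤ b.2.1 := t2.eventually_ge_atTop B
    have hb3 : ∀ᶠ b : ℝ × ℝ × ℝ in l, B ≤ b.2.2 := t3.eventually_ge_atTop B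
    filter_upwards [hb1, hb2, hb3] with b hB1 hB2 hB3 n
    -- norm of F b n
    have hnorm : ‖F b n‖ = Real.exp ((C n).re
        - Real.pi * b.1 * ((n.1 * (n.1 - 1) : ℤ) : ℝ)
        - Real.pi * b.2.1 * ((n.2.1 * (n.2.1 - 1) : ℤ) : ℝ)
        - Real.pi * b.2.2 * ((n.2.2 * (n.2.2 - 1) : ℤ) : ℝ)) := by
      rw [hFdef]
      simp only []
      rw [show (Real.pi * b.1 * ((n.1 * (n.1 - 1) : ℤ) : ℂ) : ℂ)
          = ((Real.pi * b.1 * ((n.1 * (n.1 - 1) : ℤ) : ℝ) : ℝ) : ℂ) by push_cast; ring,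
        show (Real.pi * b.2.1 * ((n.2.1 * (n.2.1 - 1) : ℤ) : ℂ) : ℂ)
          = ((Real.pi * b.2.1 * ((n.2.1 * (n.2.1 - 1) : ℤ) : ℝ) : ℝ) : ℂ) by push_cast; ring,
        show (Real.pi * b.2.2 * ((n.2.2 * (n.2.2 - 1) : ℤ) : ℂ) : ℂ)
          = ((Real.pi * b.2.2 * ((n.2.2 * (n.2.2 - 1) : ℤ) : ℝ) : ℝ) : ℂ) by push_cast; ring]
      rw [Complex.norm_exp]
      congr 1
    rw [hnorm, hbd]
    apply Real.exp_le_exp.mpr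
    set a₁ : ℝ := (n.1 : ℝ) with ha₁
    set a₂ : ℝ := (n.2.1 : ℝ) with ha₂
    set a₃ : ℝ := (n.2.2 : ℝ) with ha₃
    have hqr1 : ((n.1 * (n.1 - 1) : ℤ) : ℝ) = a₁ ^ 2 - a₁ := by rw [ha₁]; push_cast; ring
    have hqr2 : ((n.2.1 * (n.2.1 - 1) : ℤ) : ℝ) = a₂ ^ 2 - a₂ := by rw [ha₂]; push_cast; ring
    have hqr3 : ((n.2.2 * (n.2.2 - 1) : ℤ) : ℝ) = a₃ ^ 2 - a₃ := by rw [ha₃]; push_cast; ring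
    have hq01 : (0 : ℝ) ≤ ((n.1 * (n.1 - 1) : ℤ) : ℝ) := by exact_mod_cast theta_q_nonneg n.1
    have hq02 : (0 : ℝ) ≤ ((n.2.1 * (n.2.1 - 1) : ℤ) : ℝ) := by exact_mod_cast theta_q_nonneg n.2.1
    have hq03 : (0 : ℝ) ≤ ((n.2.2 * (n.2.2 - 1) : ℤ) : ℝ) := by exact_mod_cast theta_q_nonneg n.2.2
    -- bound on the real part of C n
    have hnC : ‖C n‖ ≤ ‖η₁‖ * |a₁| + ‖η₂‖ * |a₂| + ‖η₃‖ * |a₃|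
        + 2 * Real.pi * (‖τ₁₂‖ * (|a₁| * |a₂|) + ‖τ₁₃‖ * (|a₁| * |a₃|)
          + ‖τ₂₃‖ * (|a₂| * |a₃|)) := by
      rw [hCdef]
      unfold thetaCf
      refine le_trans (norm_add₃_le.trans (add_le_add_three (norm_add_le _ _) le_rfl le_rfl)) ?_
      have e1 : ‖η₁ * (n.1 : ℂ)‖ = ‖η₁‖ * |a₁| := by
        rw [norm_mul, Complex.norm_intCast, ha₁]
      have e2 : ‖η₂ * (n.2.1 : ℂ)‖ = ‖η₂‖ * |a₂| := by
        rw [norm_mul, Complex.norm_intCast, ha₂]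
      have e3 : ‖η₃ * (n.2.2 : ℂ)‖ = ‖η₃‖ * |a₃| := by
        rw [norm_mul, Complex.norm_intCast, ha₃]
      have e4 : ‖(2 * Real.pi * Complex.I : ℂ)‖ = 2 * Real.pi := by
        simp [norm_mul, abs_of_pos Real.pi_pos]
      have e5 : ‖τ₁₂ * (n.1 : ℂ) * (n.2.1 : ℂ) + τ₁₃ * (n.1 : ℂ) * (n.2.2 : ℂ)
          + τ₂₃ * (n.2.1 : ℂ) * (n.2.2 : ℂ)‖
          ≤ ‖τ₁₂‖ * (|a₁| * |a₂|) + ‖τ₁₃‖ * (|a₁| * |a₃|) + ‖τ₂₃‖ * (|a₂| * |a₃|) := by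
        refine norm_add₃_le.trans ?_
        apply add_le_add_three <;>
          simp [norm_mul, ha₁, ha₂, ha₃, mul_assoc, le_refl]
      have e6 : ‖(2 * Real.pi * Complex.I : ℂ) * (τ₁₂ * (n.1 : ℂ) * (n.2.1 : ℂ)
          + τ₁₃ * (n.1 : ℂ) * (n.2.2 : ℂ) + τ₂₃ * (n.2.1 : ℂ) * (n.2.2 : ℂ))‖
          = 2 * Real.pi * ‖τ₁₂ * (n.1 : ℂ) * (n.2.1 : ℂ) + τ₁₃ * (n.1 : ℂ) * (n.2.2 : ℂ)
            + τ₂₃ * (n.2.1 : ℂ) * (n.2.2 : ℂ)‖ := by rw [norm_mul, e4]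
      rw [e1, e2, e3, e6]
      have := mul_le_mul_of_nonneg_left e5 (by positivity : (0:ℝ) ≤ 2 * Real.pi)
      linarith
    have hre : (C n).re ≤ K * (1 + (a₁ ^ 2 + a₂ ^ 2 + a₃ ^ 2)) := by
      have h0 := Complex.re_le_norm (C n)
      have hA1 : |a₁| ≤ 1 + (a₁ ^ 2 + a₂ ^ 2 + a₃ ^ 2) := by
        nlinarith [sq_nonneg (|a₁| - 1), _root_.sq_abs a₁, sq_nonneg a₂, sq_nonneg a₃, abs_nonneg a₁]
      have hA2 : |a₂| ≤ 1 + (a₁ ^ 2 + a₂ ^ 2 + a₃ ^ 2) := by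
        nlinarith [sq_nonneg (|a₂| - 1), _root_.sq_abs a₂, sq_nonneg a₁, sq_nonneg a₃, abs_nonneg a₂]
      have hA3 : |a₃| ≤ 1 + (a₁ ^ 2 + a₂ ^ 2 + a₃ ^ 2) := by
        nlinarith [sq_nonneg (|a₃| - 1), _root_.sq_abs a₃, sq_nonneg a₁, sq_nonneg a₂, abs_nonneg a₃]
      have hA12 : |a₁| * |a₂| ≤ 1 + (a₁ ^ 2 + a₂ ^ 2 + a₃ ^ 2) := by
        nlinarith [sq_nonneg (|a₁| - |a₂|), _root_.sq_abs a₁, _root_.sq_abs a₂, sq_nonneg a₃]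
      have hA13 : |a₁| * |a₃| ≤ 1 + (a₁ ^ 2 + a₂ ^ 2 + a₃ ^ 2) := by
        nlinarith [sq_nonneg (|a₁| - |a₃|), _root_.sq_abs a₁, _root_.sq_abs a₃, sq_nonneg a₂]
      have hA23 : |a₂| * |a₃| ≤ 1 + (a₁ ^ 2 + a₂ ^ 2 + a₃ ^ 2) := by
        nlinarith [sq_nonneg (|a₂| - |a₃|), _root_.sq_abs a₂, _root_.sq_abs a₃, sq_nonneg a₁]
      have p1 := mul_le_mul_of_nonneg_left hA1 (norm_nonneg η₁)
      have p2 := mul_le_mul_of_nonneg_left hA2 (norm_nonneg η₂)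
      have p3 := mul_le_mul_of_nonneg_left hA3 (norm_nonneg η₃)
      have p4 := mul_le_mul_of_nonneg_left hA12
        (mul_nonneg (by positivity : (0:ℝ) ≤ 2 * Real.pi) (norm_nonneg τ₁₂))
      have p5 := mul_le_mul_of_nonneg_left hA13
        (mul_nonneg (by positivity : (0:ℝ) ≤ 2 * Real.pi) (norm_nonneg τ₁₃))
      have p6 := mul_le_mul_of_nonneg_left hA23
        (mul_nonneg (by positivity : (0:ℝ) ≤ 2 * Real.pi) (norm_nonneg τ₂₃))
      rw [hKdef]
      nlinarith [hnC, h0, sq_nonneg a₁, sq_nonneg a₂, sq_nonneg a₃]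
    -- key per-coordinate bounds
    have step : ∀ (t : ℝ) (qr : ℝ) (a : ℝ), B ≤ t → 0 ≤ qr → qr = a ^ 2 - a →
        (K + 1) * (a ^ 2 - 1) ≤ Real.pi * t * qr := by
      intro t qr a ht hq hqa
      have h1 : Real.pi * B * qr ≤ Real.pi * t * qr :=
        mul_le_mul_of_nonneg_right (mul_le_mul_of_nonneg_left ht Real.pi_pos.le) hq
      have h2 : (2 * K + 2) * qr ≤ Real.pi * B * qr :=
        mul_le_mul_of_nonneg_right hπB hq
      have h3 : (K + 1) * (a ^ 2 - 1) ≤ (2 * K + 2) * qr := by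
        nlinarith [mul_nonneg (by linarith : (0:ℝ) ≤ K + 1) (sq_nonneg (a - 1))]
      linarith
    have s1 := step b.1 _ a₁ hB1 hq01 hqr1
    have s2 := step b.2.1 _ a₂ hB2 hq02 hqr2
    have s3 := step b.2.2 _ a₃ hB3 hq03 hqr3
    nlinarith [hre, s1, s2, s3]
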